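/- The probability that F_k belongs to the random set A(p) satisfies the recurrence Prob(F_k ∈ A(p)) = p² · Prob(F_{k-2} ∈ A(p)) + p - p² for k ≥ 3, with Prob(F_1 ∈ A(p)) = p and Prob(F_2 ∈ A(p)) = p - p². -/

import Mathlib

open Finset

noncomputable section

def Fib (n : ℕ) : ℕ := Nat.fib (n + 1)

/-- `included c k` : whether `F_{k+1}` is included in the random Zeckendorf process,
given coins `c` (`c k` is the coin for step `k+1`): a Fibonacci number is included
with probability `p` when the previous one was not included, and is excluded otherwise. -/
def included (c : ℕ → Bool) : ℕ → Bool
  | 0 => c 0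
  | k + 1 => !included c k && c (k + 1)

/-- Extend a finite coin sequence by `false`. -/
def ext (n : ℕ) (c : Fin n → Bool) : ℕ → Bool :=
  fun j => if h : j < n then c ⟨j, h⟩ else false

/-- Probability weight of a finite coin sequence, each coin heads with probability `p`. -/
def wt (p : ℝ) {n : ℕ} (c : Fin n → Bool) : ℝ :=
  ∏ i, if c i then p else 1 - p

open Classical in
/-- Probability of an event depending on the first `n` coins. -/
def finProb (p : ℝ) (n : ℕ) (E : (ℕ → Bool) → Prop) : ℝ :=
  ∑ c : Fin n → Bool, if E (ext n c) then wt p c else 0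

/-- `Prob (F_k ∈ A(p))` for `k ≥ 1`. -/
def probIncl (p : ℝ) (k : ℕ) : ℝ :=
  finProb p k (fun c => included c (k - 1) = true)

/-- Expected value of a function of the first `n` coins. -/
def expVal (p : ℝ) (n : ℕ) (f : (ℕ → Bool) → ℝ) : ℝ :=
  ∑ c : Fin n → Bool, wt p c * f (ext n c)

/-- `W_n` : the number of selected indices among `1,...,n`. -/
def countIn (n : ℕ) (c : ℕ → Bool) : ℕ :=
  ((Icc 1 n).filter (fun j => included c (j - 1) = true)).card

lemma included_congr {c c' : ℕ → Bool} : ∀ k, (∀ j, j ≤ k → c j = c' j) →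
    included c k = included c' k
  | 0, h => by simp [included, h 0 le_rfl]
  | k + 1, h => by
    simp only [included, included_congr k (fun j hj => h j (hj.trans (Nat.le_succ k))),
      h (k + 1) le_rfl]

lemma ext_snoc_lt (n : ℕ) (c : Fin n → Bool) (b : Bool) {j : ℕ} (hj : j < n) :
    ext (n + 1) (Fin.snoc c b) j = ext n c j := by
  simp only [_root_.ext, dif_pos hj, dif_pos (hj.trans (Nat.lt_succ_self n))]
  exact Fin.snoc_castSucc (α := fun _ : Fin (n+1) => Bool) (p := c) (x := b) (i := ⟨j, hj⟩)

lemma ext_snoc_last (n : ℕ) (c : Fin n → Bool) (b : Bool) :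
    ext (n + 1) (Fin.snoc c b) n = b := by
  simp only [_root_.ext, dif_pos (Nat.lt_succ_self n)]
  exact Fin.snoc_last (α := fun _ : Fin (n+1) => Bool) (p := c) (x := b)

lemma wt_snoc (p : ℝ) {n : ℕ} (c : Fin n → Bool) (b : Bool) :
    wt p (Fin.snoc c b) = wt p c * (if b = true then p else 1 - p) := by
  have h : wt p (Fin.snoc c b)
      = ∏ i : Fin (n + 1),
        Fin.snoc (fun i => if c i = true then p else 1 - p) (if b = true then p else 1 - p) i := by
    unfold wt
    refine Finset.prod_congr rfl fun i _ => ?_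
    refine Fin.lastCases ?_ ?_ i <;> simp
  rw [h, Fin.prod_snoc]
  rfl

lemma sum_wt (p : ℝ) : ∀ n : ℕ, ∑ c : Fin n → Bool, wt p c = 1 := by
  intro n
  induction n with
  | zero => simp [wt]
  | succ n ih =>
    rw [← Equiv.sum_comp (Fin.snocEquiv fun _ => Bool) (wt p)]
    simp only [Fin.snocEquiv, Equiv.coe_fn_mk, Fintype.sum_prod_type]
    simp only [wt_snoc, ← Finset.sum_mul]
    simp [ih]

open Classical in
lemma probIncl_eq (p : ℝ) (n : ℕ) :
    probIncl p (n + 1)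
      = ∑ c : Fin (n + 1) → Bool, if included (ext (n + 1) c) n = true then wt p c else 0 := by
  unfold probIncl finProb
  simp

open Classical in
lemma probIncl_step (p : ℝ) (n : ℕ) :
    probIncl p (n + 2) = p * (1 - probIncl p (n + 1)) := by
  rw [show n + 2 = (n + 1) + 1 from rfl, probIncl_eq,
    ← Equiv.sum_comp (Fin.snocEquiv fun _ : Fin (n + 2) => Bool)]
  simp only [Fin.snocEquiv, Equiv.coe_fn_mk, Fintype.sum_prod_type]
  have key : ∀ (b : Bool) (c : Fin (n + 1) → Bool),
      included (ext (n + 2) (Fin.snoc c b)) (n + 1)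
        = (!included (ext (n + 1) c) n && b) := by
    intro b c
    rw [show included (ext (n + 2) (Fin.snoc c b)) (n + 1)
        = (!included (ext (n + 2) (Fin.snoc c b)) n
          && ext (n + 2) (Fin.snoc c b) (n + 1)) from rfl,
      ext_snoc_last (n + 1) c b,
      included_congr n (fun j hj => ext_snoc_lt (n + 1) c b (Nat.lt_succ_of_le hj))]
  have hb : ∀ b : Bool, (∑ c : Fin (n + 1) → Bool,
      if included (ext (n + 2) (Fin.snoc c b)) (n + 1) = true
        then wt p (Fin.snoc c b) else 0)
      = if b = true then p * (1 - probIncl p (n + 1)) else 0 := by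
    intro b
    cases b with
    | false => simp [key]
    | true =>
      simp only [key, Bool.and_true, if_true]
      have step : ∀ c : Fin (n + 1) → Bool,
          (if (!included (ext (n + 1) c) n) = true then wt p (Fin.snoc c true) else 0)
          = p * (wt p c - if included (ext (n + 1) c) n = true then wt p c else 0) := by
        intro c
        rw [wt_snoc]
        by_cases h : included (ext (n + 1) c) n = true <;> simp [h] <;> ring
      rw [Fintype.sum_congr _ _ step, ← Finset.mul_sum, Finset.sum_sub_distrib, sum_wt,
        ← probIncl_eq]
  refine (Fintype.sum_congr _ _ hb).trans ?_
  simp [Fintype.sum_bool]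

open Classical in
lemma probIncl_one (p : ℝ) : probIncl p 1 = p := by
  rw [show (1 : ℕ) = 0 + 1 from rfl, probIncl_eq,
    ← Equiv.sum_comp (Fin.snocEquiv fun _ : Fin 1 => Bool)]
  simp only [Fin.snocEquiv, Equiv.coe_fn_mk, Fintype.sum_prod_type]
  have key : ∀ (b : Bool) (c : Fin 0 → Bool),
      included (ext 1 (Fin.snoc c b)) 0 = b := fun b c => ext_snoc_last 0 c b
  simp only [key]
  rw [Fintype.sum_bool]
  simp [wt_snoc, wt, Fin.snoc]

/-- The probability that `F_k ∈ A(p)` satisfies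
`Prob(F_k ∈ A(p)) = p²·Prob(F_{k-2} ∈ A(p)) + p - p²` for `k ≥ 3`, with
`Prob(F_1 ∈ A(p)) = p` and `Prob(F_2 ∈ A(p)) = p - p²`. -/
theorem probIncl_recurrence (p : ℝ) (hp0 : 0 < p) (hp1 : p < 1) :
    probIncl p 1 = p ∧ probIncl p 2 = p - p ^ 2 ∧
    ∀ k : ℕ, 3 ≤ k → probIncl p k = p ^ 2 * probIncl p (k - 2) + p - p ^ 2 := by
  refine ⟨probIncl_one p, ?_, ?_⟩
  · rw [show (2 : ℕ) = 0 + 2 from rfl, probIncl_step, probIncl_one]; ring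
  · intro k hk
    obtain ⟨j, rfl⟩ : ∃ j, k = j + 3 := ⟨k - 3, by omega⟩
    rw [show j + 3 = (j + 1) + 2 from rfl, probIncl_step,
      show j + 1 + 1 = j + 2 from rfl, probIncl_step,
      show j + 3 - 2 = j + 1 from rfl]
    ring

end
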